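/- Let α > 0, k > 0, and let w_i > 0 and S > 0 be real numbers. Define g(w) = k·w^α/(w^α + k^α·S) and f(w) = w^α/(w^α + S). Then g'(k·w_i) = f'(w_i); that is, the marginal gain from spending in a k-value battle at the proportional spend k·w_i equals the marginal gain from spending in a 1-value battle at spend w_i. -/

import Mathlib

lemma aux_hasDeriv (α b c : ℝ) (hα : 0 < α) (x : ℝ) (hx : 0 < x) (hc : 0 < c) :
    HasDerivAt (fun w : ℝ => b * w ^ α / (w ^ α + c))
      (b * α * x ^ (α - 1) * c / (x ^ α + c) ^ 2) x := by
  have hr : HasDerivAt (fun w : ℝ => w ^ α) (α * x ^ (α - 1)) x :=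
    Real.hasDerivAt_rpow_const (Or.inl hx.ne')
  have hnum : HasDerivAt (fun w : ℝ => b * w ^ α) (b * (α * x ^ (α - 1))) x :=
    hr.const_mul b
  have hden : HasDerivAt (fun w : ℝ => w ^ α + c) (α * x ^ (α - 1)) x :=
    hr.add_const c
  have hne : x ^ α + c ≠ 0 := by positivity
  have : HasDerivAt (fun w : ℝ => b * w ^ α / (w ^ α + c)) _ x := hnum.div hden hne
  convert this using 1
  have hxα : 0 < x ^ α := Real.rpow_pos_of_pos hx α
  ring

theorem stmt_3 (α k S wi : ℝ) (hα : 0 < α) (hk : 0 < k) (hwi : 0 < wi) (hS : 0 < S) :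
    deriv (fun w : ℝ => k * w ^ α / (w ^ α + k ^ α * S)) (k * wi) =
      deriv (fun w : ℝ => w ^ α / (w ^ α + S)) wi := by
  have hkS : 0 < k ^ α * S := by positivity
  have hkwi : 0 < k * wi := by positivity
  have h1 := (aux_hasDeriv α k (k ^ α * S) hα (k * wi) hkwi hkS).deriv
  have h2 := (aux_hasDeriv α 1 S hα wi hwi hS).deriv
  simp only [one_mul] at h2
  rw [h1]
  rw [h2]
  have hmul1 : (k * wi) ^ α = k ^ α * wi ^ α := Real.mul_rpow hk.le hwi.le
  have hmul2 : (k * wi) ^ (α - 1) = k ^ (α - 1) * wi ^ (α - 1) :=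
    Real.mul_rpow hk.le hwi.le
  rw [hmul1, hmul2]
  have hkk : k * k ^ (α - 1) = k ^ α := by
    have h := Real.rpow_add hk 1 (α - 1)
    rw [Real.rpow_one] at h
    rw [← h]; ring_nf
  have hkα : 0 < k ^ α := Real.rpow_pos_of_pos hk α
  have hden : k ^ α * wi ^ α + k ^ α * S = k ^ α * (wi ^ α + S) := by ring
  rw [hden]
  have hwiα : 0 < wi ^ α := Real.rpow_pos_of_pos hwi α
  have hne : (wi ^ α + S) ≠ 0 := by positivity
  field_simp
  ring_nf
  have hkk' : k * k ^ (-1 + α) = k ^ α := by rw [show (-1 : ℝ) + α = α - 1 by ring]; exact hkk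
  linear_combination hkk'
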